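/- Let L ∈ R^3 be nonzero and p₁, p₂ ∈ R^3 nonzero vectors each making an angle at most 90° with L (i.e., pᵢ·L ≥ 0). Then for every t ∈ [0,1] with p = (1-t)p₁ + t·p₂ nonzero, ‖p × L‖/(‖p‖‖L‖) ≤ max(‖p₁ × L‖/(‖p₁‖‖L‖), ‖p₂ × L‖/(‖p₂‖‖L‖)), i.e., the sine of the angle between a convex combination of p₁, p₂ and L is bounded by the maximum of the sines of the angles between pᵢ and L. -/

import Mathlib

open RealInnerProductSpace
set_option maxHeartbeats 1000000

noncomputable def cross3 (a b : EuclideanSpace ℝ (Fin 3)) : EuclideanSpace ℝ (Fin 3) :=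
  (WithLp.equiv 2 (Fin 3 → ℝ)).symm
    ![a 1 * b 2 - a 2 * b 1, a 2 * b 0 - a 0 * b 2, a 0 * b 1 - a 1 * b 0]

lemma lagrange (a b : EuclideanSpace ℝ (Fin 3)) :
    ‖cross3 a b‖ ^ 2 + ⟪a, b⟫ ^ 2 = ‖a‖ ^ 2 * ‖b‖ ^ 2 := by
  rw [← real_inner_self_eq_norm_sq, ← real_inner_self_eq_norm_sq, ← real_inner_self_eq_norm_sq]
  simp only [cross3, PiLp.inner_apply, Fin.sum_univ_three]
  simp
  ring

lemma cross3_comb (t : ℝ) (p1 p2 L : EuclideanSpace ℝ (Fin 3)) :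
    cross3 ((1 - t) • p1 + t • p2) L = (1 - t) • cross3 p1 L + t • cross3 p2 L := by
  ext i
  fin_cases i <;>
    simp [cross3, PiLp.add_apply, PiLp.smul_apply, smul_eq_mul] <;> ring

lemma le_of_sq_le_sq' (x y : ℝ) (hx : 0 ≤ x) (hy : 0 ≤ y) (h : x ^ 2 ≤ y ^ 2) : x ≤ y := by
  have := Real.sqrt_le_sqrt h
  rwa [Real.sqrt_sq hx, Real.sqrt_sq hy] at this

theorem stmt10 (L p1 p2 : EuclideanSpace ℝ (Fin 3))
    (hL : L ≠ 0) (hp1 : p1 ≠ 0) (hp2 : p2 ≠ 0)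
    (h1 : 0 ≤ ⟪p1, L⟫) (h2 : 0 ≤ ⟪p2, L⟫) :
    ∀ t ∈ Set.Icc (0 : ℝ) 1, ∀ p : EuclideanSpace ℝ (Fin 3),
      p = (1 - t) • p1 + t • p2 → p ≠ 0 →
      ‖cross3 p L‖ / (‖p‖ * ‖L‖) ≤
        max (‖cross3 p1 L‖ / (‖p1‖ * ‖L‖)) (‖cross3 p2 L‖ / (‖p2‖ * ‖L‖)) := by
  rintro t ⟨ht0, ht1⟩ p hp hpne
  set M : ℝ := max (‖cross3 p1 L‖ / (‖p1‖ * ‖L‖)) (‖cross3 p2 L‖ / (‖p2‖ * ‖L‖)) with hM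
  have hLpos : (0:ℝ) < ‖L‖ := norm_pos_iff.mpr hL
  have hN1 : (0:ℝ) < ‖p1‖ * ‖L‖ := mul_pos (norm_pos_iff.mpr hp1) hLpos
  have hN2 : (0:ℝ) < ‖p2‖ * ‖L‖ := mul_pos (norm_pos_iff.mpr hp2) hLpos
  have hN : (0:ℝ) < ‖p‖ * ‖L‖ := mul_pos (norm_pos_iff.mpr hpne) hLpos
  have hM0 : 0 ≤ M := le_trans (div_nonneg (norm_nonneg _) hN1.le) (le_max_left _ _)
  have hs1 : ‖cross3 p1 L‖ ≤ M * (‖p1‖ * ‖L‖) := by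
    rw [← div_le_iff₀ hN1]; exact le_max_left _ _
  have hs2 : ‖cross3 p2 L‖ ≤ M * (‖p2‖ * ‖L‖) := by
    rw [← div_le_iff₀ hN2]; exact le_max_right _ _
  rw [div_le_iff₀ hN]
  have lag : ‖cross3 p L‖ ^ 2 + ⟪p, L⟫ ^ 2 = ‖p‖ ^ 2 * ‖L‖ ^ 2 := lagrange p L
  have lag1 : ‖cross3 p1 L‖ ^ 2 + ⟪p1, L⟫ ^ 2 = ‖p1‖ ^ 2 * ‖L‖ ^ 2 := lagrange p1 L
  have lag2 : ‖cross3 p2 L‖ ^ 2 + ⟪p2, L⟫ ^ 2 = ‖p2‖ ^ 2 * ‖L‖ ^ 2 := lagrange p2 L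
  by_cases hM1 : 1 ≤ M
  · have hle : ‖cross3 p L‖ ≤ ‖p‖ * ‖L‖ := by
      apply le_of_sq_le_sq' _ _ (norm_nonneg _) hN.le
      nlinarith [sq_nonneg (⟪p, L⟫)]
    calc ‖cross3 p L‖ ≤ ‖p‖ * ‖L‖ := hle
      _ = 1 * (‖p‖ * ‖L‖) := by ring
      _ ≤ M * (‖p‖ * ‖L‖) := by nlinarith
  · push_neg at hM1
    set k : ℝ := Real.sqrt (1 - M ^ 2) with hk
    have hk0 : 0 ≤ k := Real.sqrt_nonneg _
    have hk2 : k ^ 2 = 1 - M ^ 2 := Real.sq_sqrt (by nlinarith)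
    have key1 : ‖cross3 p1 L‖ * k ≤ M * ⟪p1, L⟫ := by
      apply le_of_sq_le_sq' _ _ (mul_nonneg (norm_nonneg _) hk0) (mul_nonneg hM0 h1)
      have hsq : ‖cross3 p1 L‖ ^ 2 ≤ (M * (‖p1‖ * ‖L‖)) ^ 2 :=
        pow_le_pow_left₀ (norm_nonneg _) hs1 2
      nlinarith [sq_nonneg (‖cross3 p1 L‖)]
    have key2 : ‖cross3 p2 L‖ * k ≤ M * ⟪p2, L⟫ := by
      apply le_of_sq_le_sq' _ _ (mul_nonneg (norm_nonneg _) hk0) (mul_nonneg hM0 h2)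
      have hsq : ‖cross3 p2 L‖ ^ 2 ≤ (M * (‖p2‖ * ‖L‖)) ^ 2 :=
        pow_le_pow_left₀ (norm_nonneg _) hs2 2
      nlinarith [sq_nonneg (‖cross3 p2 L‖)]
    have hsub : ‖cross3 p L‖ ≤ (1 - t) * ‖cross3 p1 L‖ + t * ‖cross3 p2 L‖ := by
      rw [hp, cross3_comb]
      calc ‖(1 - t) • cross3 p1 L + t • cross3 p2 L‖
          ≤ ‖(1 - t) • cross3 p1 L‖ + ‖t • cross3 p2 L‖ := norm_add_le _ _
        _ = (1 - t) * ‖cross3 p1 L‖ + t * ‖cross3 p2 L‖ := by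
            rw [norm_smul, norm_smul, Real.norm_eq_abs, Real.norm_eq_abs,
              abs_of_nonneg (by linarith), abs_of_nonneg ht0]
    have hc : ⟪p, L⟫ = (1 - t) * ⟪p1, L⟫ + t * ⟪p2, L⟫ := by
      rw [hp, inner_add_left, real_inner_smul_left, real_inner_smul_left]
    have hkey : ‖cross3 p L‖ * k ≤ M * ⟪p, L⟫ := by
      rw [hc]
      calc ‖cross3 p L‖ * k ≤ ((1 - t) * ‖cross3 p1 L‖ + t * ‖cross3 p2 L‖) * k :=
            mul_le_mul_of_nonneg_right hsub hk0
        _ = (1 - t) * (‖cross3 p1 L‖ * k) + t * (‖cross3 p2 L‖ * k) := by ring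
        _ ≤ (1 - t) * (M * ⟪p1, L⟫) + t * (M * ⟪p2, L⟫) :=
            add_le_add (mul_le_mul_of_nonneg_left key1 (by linarith))
              (mul_le_mul_of_nonneg_left key2 ht0)
        _ = M * ((1 - t) * ⟪p1, L⟫ + t * ⟪p2, L⟫) := by ring
    apply le_of_sq_le_sq' _ _ (norm_nonneg _) (mul_nonneg hM0 hN.le)
    have hkeysq : (‖cross3 p L‖ * k) ^ 2 ≤ (M * ⟪p, L⟫) ^ 2 :=
      pow_le_pow_left₀ (mul_nonneg (norm_nonneg _) hk0) hkey 2
    nlinarith [sq_nonneg (‖cross3 p L‖)]
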